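/- Consider an instance of the MST problem under explorable uncertainty with unique T_L = T_U, and a cycle C_i for some i ∈ {1,…,l}. Let l_i ∈ C_i ∖ {f_i} be an edge such that I_{l_i} ∩ I_{f_i} ≠ ∅ and l_i has the largest upper limit in C_i ∖ {f_i}. Then {f_i, l_i} is a witness set; moreover, if the true value w_{f_i} lies in I_{l_i}, then l_i is mandatory. -/

import Mathlib

/-!
Common framework: the minimum spanning tree problem under explorable
uncertainty with (untrusted) predictions.
-/

open scoped BigOperators
open scoped Classical

noncomputable section

/-- An instance of the MST problem under explorable uncertainty with predictions:
a connected (multi)graph whose edges carry uncertainty intervals (open `(L,U)` for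
non-trivial edges, i.e. `L < U`, and the singleton `{L}` for trivial edges, i.e. `L = U`)
together with predicted values `pw e` lying in the intervals. -/
structure UncGraph where
  V : Type
  E : Type
  fintV : Fintype V
  fintE : Fintype E
  decV : DecidableEq V
  decE : DecidableEq E
  ends : E → Sym2 V
  conn : ∀ u v : V, Relation.ReflTransGen (fun a b => ∃ e : E, ends e = s(a, b)) u v
  L : E → ℝ
  U : E → ℝ
  LU : ∀ e, L e ≤ U e
  pw : E → ℝ
  pw_mem : ∀ e, (L e = U e ∧ pw e = L e) ∨ (L e < pw e ∧ pw e < U e)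

attribute [instance] UncGraph.fintV UncGraph.fintE UncGraph.decV UncGraph.decE

namespace UncGraph

variable (G : UncGraph)

/-- The uncertainty interval of an edge: the open interval `(L e, U e)` for a
non-trivial edge, the singleton `{L e}` for a trivial edge (`L e = U e`). -/
def I (e : G.E) : Set ℝ :=
  {x | (G.L e = G.U e ∧ x = G.L e) ∨ (G.L e < x ∧ x < G.U e)}

/-- A trivial edge: its interval is a singleton. -/
def TrivialEdge (e : G.E) : Prop := G.L e = G.U e

/-- A non-trivial edge: its interval is a nonempty open interval. -/
def NontrivialEdge (e : G.E) : Prop := G.L e < G.U e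

/-- `w` is a valid realization of true edge weights. -/
def Valid (w : G.E → ℝ) : Prop := ∀ e, w e ∈ G.I e

/-- Connectivity of two vertices using only edges from `S`. -/
def ConnectsVia (S : Finset G.E) (u v : G.V) : Prop :=
  Relation.ReflTransGen (fun a b => ∃ e ∈ S, G.ends e = s(a, b)) u v

/-- `S` is a spanning tree: it connects all vertices and has `|V| - 1` edges. -/
def IsSpanningTree (S : Finset G.E) : Prop :=
  (∀ u v : G.V, G.ConnectsVia S u v) ∧ S.card + 1 = Fintype.card G.V

/-- `T` is a minimum spanning tree with respect to the weight function `wf`. -/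
def IsMST (wf : G.E → ℝ) (T : Finset G.E) : Prop :=
  G.IsSpanningTree T ∧ ∀ T', G.IsSpanningTree T' → ∑ e ∈ T, wf e ≤ ∑ e ∈ T', wf e

/-- `wf` agrees with the true values `w` on the queried set `Q` and lies in the
uncertainty intervals elsewhere. -/
def Compatible (w : G.E → ℝ) (Q : Finset G.E) (wf : G.E → ℝ) : Prop :=
  (∀ e ∈ Q, wf e = w e) ∧ ∀ e, wf e ∈ G.I e

/-- The query set `Q` verifies `T`: `T` is an MST for every weight function
compatible with the revealed values. -/
def Verifies (w : G.E → ℝ) (Q T : Finset G.E) : Prop :=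
  ∀ wf, G.Compatible w Q wf → G.IsMST wf T

/-- `Q` is a feasible query set for true values `w`. -/
def Feasible (w : G.E → ℝ) (Q : Finset G.E) : Prop :=
  ∃ T, G.Verifies w Q T

/-- The minimum cardinality of a feasible query set. -/
def optCost (w : G.E → ℝ) : ℕ :=
  sInf {n | ∃ Q, G.Feasible w Q ∧ Q.card = n}

/-- `Q` is an optimal (minimum-cardinality feasible) query set. -/
def IsOptimal (w : G.E → ℝ) (Q : Finset G.E) : Prop :=
  G.Feasible w Q ∧ ∀ Q', G.Feasible w Q' → Q.card ≤ Q'.card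

/-- An edge is mandatory if it belongs to every feasible query set. -/
def Mandatory (w : G.E → ℝ) (e : G.E) : Prop :=
  ∀ Q, G.Feasible w Q → e ∈ Q

/-- A witness set intersects every feasible query set. -/
def IsWitnessSet (w : G.E → ℝ) (W : Finset G.E) : Prop :=
  ∀ Q, G.Feasible w Q → ∃ e ∈ W, e ∈ Q

/-- An edge is prediction mandatory if it is mandatory under the assumption that
all queries return the predicted values. -/
def PredMandatory (e : G.E) : Prop := G.Mandatory G.pw e

/-- An instance is prediction mandatory free if it has no prediction mandatory edge. -/
def PredMandatoryFree : Prop := ∀ e, ¬ G.PredMandatory e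

/-- Hop-distance indicator `k_{e'}(e)`: `0` if the prediction `p e` has the same
relation to the interval `I e'` as the true value `w e` (both `≤ L e'`, both
`≥ U e'`, or both strictly inside), and `1` otherwise. -/
def kErr (p w : G.E → ℝ) (e e' : G.E) : ℕ :=
  if (p e ≤ G.L e' ∧ w e ≤ G.L e') ∨ (G.U e' ≤ p e ∧ G.U e' ≤ w e) ∨
      (G.L e' < p e ∧ p e < G.U e' ∧ G.L e' < w e ∧ w e < G.U e')
  then 0 else 1

/-- `h→(e) = Σ_{e' ≠ e} k_{e'}(e)`. -/
def hright (p w : G.E → ℝ) (e : G.E) : ℕ :=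
  ∑ e' ∈ Finset.univ.erase e, G.kErr p w e e'

/-- `h←(e) = Σ_{e' ≠ e} k_e(e')`. -/
def hleft (p w : G.E → ℝ) (e : G.E) : ℕ :=
  ∑ e' ∈ Finset.univ.erase e, G.kErr p w e' e

/-- `h→(E') = Σ_{e ∈ E'} h→(e)`. -/
def hrightSum (p w : G.E → ℝ) (S : Finset G.E) : ℕ := ∑ e ∈ S, G.hright p w e

/-- `h←(E') = Σ_{e ∈ E'} h←(e)`. -/
def hleftSum (p w : G.E → ℝ) (S : Finset G.E) : ℕ := ∑ e ∈ S, G.hleft p w e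

/-- The hop distance of prediction `p` for realization `w`. -/
def hopDist (p w : G.E → ℝ) : ℕ := ∑ e, G.hright p w e

/-- The hop distance `k_h` of the instance's predictions for realization `w`. -/
def khop (w : G.E → ℝ) : ℕ := G.hopDist G.pw w

/-- Lower-limit weights `w^L`: `L e + ε` for non-trivial edges, the known value
for trivial edges. -/
def lowerWeight (ε : ℝ) (e : G.E) : ℝ := if G.L e = G.U e then G.L e else G.L e + ε

/-- Upper-limit weights `w^U`: `U e - ε` for non-trivial edges, the known value
for trivial edges. -/
def upperWeight (ε : ℝ) (e : G.E) : ℝ := if G.L e = G.U e then G.L e else G.U e - ε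

/-- `T` is a lower limit tree: an MST for `w^L` for all sufficiently small `ε > 0`. -/
def IsLowerLimitTree (T : Finset G.E) : Prop :=
  ∃ ε₀ > (0 : ℝ), ∀ ε : ℝ, 0 < ε → ε < ε₀ → G.IsMST (G.lowerWeight ε) T

/-- `T` is an upper limit tree: an MST for `w^U` for all sufficiently small `ε > 0`. -/
def IsUpperLimitTree (T : Finset G.E) : Prop :=
  ∃ ε₀ > (0 : ℝ), ∀ ε : ℝ, 0 < ε → ε < ε₀ → G.IsMST (G.upperWeight ε) T

/-- `T` is simultaneously the unique lower limit tree and the unique upper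
limit tree (`T_L = T_U`, both unique). -/
def UniqueLimitTrees (T : Finset G.E) : Prop :=
  G.IsLowerLimitTree T ∧ G.IsUpperLimitTree T ∧
  (∀ T', G.IsLowerLimitTree T' → T' = T) ∧
  (∀ T', G.IsUpperLimitTree T' → T' = T)

/-- Number of edge-ends of `S` incident to `v` (loops count twice). -/
def incCount (S : Finset G.E) (v : G.V) : ℕ :=
  ∑ e ∈ S, (if G.ends e = s(v, v) then 2 else if v ∈ G.ends e then 1 else 0)

/-- `S` forms a single cycle: nonempty, every vertex has degree `0` or `2`,
and the support is connected. -/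
def IsCycle (S : Finset G.E) : Prop :=
  S.Nonempty ∧ (∀ v, G.incCount S v = 0 ∨ G.incCount S v = 2) ∧
  ∀ u v, G.incCount S u ≠ 0 → G.incCount S v ≠ 0 → G.ConnectsVia S u v

/-- `C` is the cycle closed by adding the edge `f` to the tree `T`. -/
def IsCycleOf (T : Finset G.E) (f : G.E) (C : Finset G.E) : Prop :=
  G.IsCycle C ∧ f ∈ C ∧ C ⊆ insert f T

/-- `e'` lies in the cut `X_e` between the two components of `T \ {e}`. -/
def InCut (T : Finset G.E) (e e' : G.E) : Prop :=
  ∀ u v : G.V, G.ends e' = s(u, v) → ¬ G.ConnectsVia (T.erase e) u v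

/-- `S` is a path between the (distinct) vertices `a` and `b`. -/
def IsPathBetween (S : Finset G.E) (a b : G.V) : Prop :=
  a ≠ b ∧ G.incCount S a = 1 ∧ G.incCount S b = 1 ∧
  (∀ v, v ≠ a → v ≠ b → G.incCount S v = 0 ∨ G.incCount S v = 2) ∧
  ∀ v, G.incCount S v ≠ 0 → G.ConnectsVia S a v

/-- `{f, l}` is an edge of the vertex cover instance `Ḡ` (w.r.t. the tree `T`):
`f ∉ T`, `l ≠ f` lies on the cycle closed by `f`, both are non-trivial, and
their intervals intersect. -/
def VCEdge (T : Finset G.E) (f l : G.E) : Prop :=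
  f ∉ T ∧ l ≠ f ∧ G.NontrivialEdge f ∧ G.NontrivialEdge l ∧
  (∃ C, G.IsCycleOf T f C ∧ l ∈ C) ∧ (G.I f ∩ G.I l).Nonempty

/-- Adjacency in the vertex cover instance `Ḡ` (symmetrized). -/
def VCAdj (T : Finset G.E) (a b : G.E) : Prop := G.VCEdge T a b ∨ G.VCEdge T b a

/-- `S` is a vertex cover of the vertex cover instance `Ḡ`. -/
def IsVCCover (T S : Finset G.E) : Prop :=
  ∀ a b, G.VCAdj T a b → a ∈ S ∨ b ∈ S

/-- `S` is a minimum vertex cover of the vertex cover instance `Ḡ`. -/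
def IsMinVC (T S : Finset G.E) : Prop :=
  G.IsVCCover T S ∧ ∀ S', G.IsVCCover T S' → S.card ≤ S'.card

/-- Edge `e` does not occur in the instance anymore: independently of the
remaining uncertainty it can be deleted (some MST avoids it, for every
realization) or contracted (some MST contains it, for every realization). -/
def Removable (e : G.E) : Prop :=
  (∀ wf : G.E → ℝ, (∀ e', wf e' ∈ G.I e') → ∃ T, G.IsMST wf T ∧ e ∉ T) ∨
  (∀ wf : G.E → ℝ, (∀ e', wf e' ∈ G.I e') → ∃ T, G.IsMST wf T ∧ e ∈ T)

end UncGraph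

/-- The instance obtained from `G` by querying the edges of `Q` under true
values `w`: the intervals of queried edges collapse to the revealed values. -/
def UncGraph.restrict (G : UncGraph) (w : G.E → ℝ) (Q : Finset G.E) : UncGraph where
  V := G.V
  E := G.E
  fintV := G.fintV
  fintE := G.fintE
  decV := G.decV
  decE := G.decE
  ends := G.ends
  conn := G.conn
  L := fun e => if e ∈ Q then w e else G.L e
  U := fun e => if e ∈ Q then w e else G.U e
  LU := fun e => by by_cases h : e ∈ Q <;> simp [h, G.LU e]
  pw := fun e => if e ∈ Q then w e else G.pw e
  pw_mem := fun e => by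
    by_cases h : e ∈ Q
    · simp [h]
    · simpa [h] using G.pw_mem e

/-- A deterministic adaptive query algorithm: given the instance and the set of
already queried edges together with the revealed values, it either picks the next
edge to query or stops (`none`).  The lawfulness condition states that the
decision may only depend on the revealed values of already queried edges. -/
structure Algorithm where
  next : ∀ G : UncGraph, Finset G.E → (G.E → ℝ) → Option G.E
  lawful : ∀ (G : UncGraph) (Q : Finset G.E) (w w' : G.E → ℝ),
    (∀ e ∈ Q, w e = w' e) → next G Q w = next G Q w'

namespace Algorithm

/-- The set of edges queried by `A` after `n` steps, on instance `G` with true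
values `w`; the algorithm stops as soon as the queried set is feasible. -/
def runQueries (A : Algorithm) (G : UncGraph) (w : G.E → ℝ) : ℕ → Finset G.E
  | 0 => ∅
  | n + 1 =>
    let Q := A.runQueries G w n
    if G.Feasible w Q then Q
    else
      match A.next G Q w with
      | some e => insert e Q
      | none => Q

/-- The final query set of the run of `A`. -/
def finalQueries (A : Algorithm) (G : UncGraph) (w : G.E → ℝ) : Finset G.E :=
  A.runQueries G w (Fintype.card G.E + 1)

/-- The number of queries made by `A` on instance `G` with true values `w`. -/
def algCost (A : Algorithm) (G : UncGraph) (w : G.E → ℝ) : ℕ :=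
  (A.finalQueries G w).card

/-- `A` solves every instance: it always ends with a feasible query set. -/
def Solves (A : Algorithm) : Prop :=
  ∀ (G : UncGraph) (w : G.E → ℝ), G.Valid w → G.Feasible w (A.finalQueries G w)

/-- `A` is `α`-consistent: on instances with correct predictions it makes at
most `α · |OPT|` queries. -/
def Consistent (A : Algorithm) (α : ℝ) : Prop :=
  ∀ G : UncGraph, (A.algCost G G.pw : ℝ) ≤ α * (G.optCost G.pw : ℝ)

/-- `A` is `β`-robust: it makes at most `β · |OPT|` queries on every instance. -/
def Robust (A : Algorithm) (β : ℝ) : Prop :=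
  ∀ (G : UncGraph) (w : G.E → ℝ), G.Valid w → (A.algCost G w : ℝ) ≤ β * (G.optCost w : ℝ)

/-- Run of a preprocessing algorithm: it stops exactly when `next` returns
`none` (rather than when the queried set is feasible). -/
def runPre (A : Algorithm) (G : UncGraph) (w : G.E → ℝ) : ℕ → Finset G.E
  | 0 => ∅
  | n + 1 =>
    let Q := A.runPre G w n
    match A.next G Q w with
    | some e => insert e Q
    | none => Q

/-- The final query set of a preprocessing run of `A`. -/
def preQueries (A : Algorithm) (G : UncGraph) (w : G.E → ℝ) : Finset G.E :=
  A.runPre G w (Fintype.card G.E + 1)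

end Algorithm

namespace UncGraph

variable {G : UncGraph}

lemma con_refl (S : Finset G.E) (u : G.V) : G.ConnectsVia S u u := Relation.ReflTransGen.refl

lemma con_symm {S : Finset G.E} {u v : G.V} (h : G.ConnectsVia S u v) : G.ConnectsVia S v u := by
  refine (@Relation.ReflTransGen.stdSymm _ _ ⟨?_⟩).symm _ _ h
  rintro a b ⟨e, he, hs⟩
  exact ⟨e, he, by rw [hs, Sym2.eq_swap]⟩

lemma con_trans {S : Finset G.E} {u v x : G.V} (h : G.ConnectsVia S u v)
    (h' : G.ConnectsVia S v x) : G.ConnectsVia S u x := h.trans h'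

lemma con_mono {S S' : Finset G.E} (hss : S ⊆ S') {u v : G.V} (h : G.ConnectsVia S u v) :
    G.ConnectsVia S' u v := by
  refine Relation.ReflTransGen.mono ?_ _ _ h
  rintro a b ⟨e, he, hs⟩
  exact ⟨e, hss he, hs⟩

lemma con_step {S : Finset G.E} {e : G.E} (he : e ∈ S) {u v : G.V}
    (hs : G.ends e = s(u, v)) : G.ConnectsVia S u v :=
  Relation.ReflTransGen.single ⟨e, he, hs⟩

/-- crossing is rep-independent -/
lemma cross_of_rep {S : Finset G.E} {g : G.E} {a b : G.V} (hg : G.ends g = s(a, b))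
    (hcon : ¬ G.ConnectsVia S a b) :
    ∀ a' b', G.ends g = s(a', b') → ¬ G.ConnectsVia S a' b' := by
  intro a' b' hg' hcon'
  rw [hg, Sym2.eq_iff] at hg'
  rcases hg' with ⟨ha, hb⟩ | ⟨ha, hb⟩
  · subst ha; subst hb; exact hcon hcon'
  · subst ha; subst hb; exact hcon (con_symm hcon')

lemma bridge {S : Finset G.E} (g : G.E) {p q : G.V} (hpq : G.ends g = s(p, q))
    {x y : G.V} (h : G.ConnectsVia S x y) :
    G.ConnectsVia (S.erase g) x y ∨
      (G.ConnectsVia (S.erase g) x p ∧ G.ConnectsVia (S.erase g) q y) ∨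
      (G.ConnectsVia (S.erase g) x q ∧ G.ConnectsVia (S.erase g) p y) := by
  induction h with
  | refl => exact Or.inl (con_refl _ _)
  | @tail b c hxb hbc ih =>
    obtain ⟨e, heS, hends⟩ := hbc
    by_cases heg : e = g
    · subst heg
      rw [hpq, Sym2.eq_iff] at hends
      rcases hends with ⟨hb, hc⟩ | ⟨hb, hc⟩ <;> subst hb <;> subst hc
      · -- b = p, c = q
        rcases ih with h1 | ⟨h1, h2⟩ | ⟨h1, h2⟩
        · exact Or.inr (Or.inl ⟨h1, con_refl _ _⟩)
        · exact Or.inl (con_trans h1 (con_symm h2))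
        · exact Or.inl h1
      · -- b = q, c = p
        rcases ih with h1 | ⟨h1, h2⟩ | ⟨h1, h2⟩
        · exact Or.inr (Or.inr ⟨h1, con_refl _ _⟩)
        · exact Or.inl h1
        · exact Or.inl (con_trans h1 (con_symm h2))
    · have heS' : e ∈ S.erase g := Finset.mem_erase.2 ⟨heg, heS⟩
      have hstep : G.ConnectsVia (S.erase g) b c := con_step heS' hends
      rcases ih with h1 | ⟨h1, h2⟩ | ⟨h1, h2⟩
      · exact Or.inl (con_trans h1 hstep)
      · exact Or.inr (Or.inl ⟨h1, con_trans h2 hstep⟩)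
      · exact Or.inr (Or.inr ⟨h1, con_trans h2 hstep⟩)

lemma repl {S : Finset G.E} {g : G.E} {p q : G.V} (hpq : G.ends g = s(p, q))
    (hcon : G.ConnectsVia (S.erase g) p q) {x y : G.V} (h : G.ConnectsVia S x y) :
    G.ConnectsVia (S.erase g) x y := by
  rcases bridge g hpq h with h1 | ⟨h1, h2⟩ | ⟨h1, h2⟩
  · exact h1
  · exact con_trans h1 (con_trans hcon h2)
  · exact con_trans h1 (con_trans (con_symm hcon) h2)

lemma extract {S R : Finset G.E} {u v : G.V} (h : G.ConnectsVia S u v)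
    (hall : ∀ g ∈ S, ∀ a b, G.ends g = s(a, b) → G.ConnectsVia R a b) :
    G.ConnectsVia R u v := by
  induction h with
  | refl => exact con_refl _ _
  | @tail b c hxb hbc ih =>
    obtain ⟨e, heS, hends⟩ := hbc
    exact con_trans ih (hall e heS _ _ hends)

/-- find an edge on a walk whose ends are not `R`-connected -/
lemma extract_cross {S R : Finset G.E} {u v : G.V} (h : G.ConnectsVia S u v)
    (hnc : ¬ G.ConnectsVia R u v) :
    ∃ g ∈ S, ∃ a b, G.ends g = s(a, b) ∧ ¬ G.ConnectsVia R a b := by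
  by_contra hno
  push_neg at hno
  exact hnc (extract h hno)


variable (G) in
def reach (S : Finset G.E) (v : G.V) : Finset G.V :=
  Finset.univ.filter (fun x => G.ConnectsVia S v x)

lemma mem_reach {S : Finset G.E} {v x : G.V} : x ∈ G.reach S v ↔ G.ConnectsVia S v x := by
  simp [UncGraph.reach]

lemma reach_eq_of_con {S : Finset G.E} {v w : G.V} (h : G.ConnectsVia S v w) :
    G.reach S v = G.reach S w := by
  ext x
  simp only [mem_reach]
  exact ⟨fun h' => con_trans (con_symm h) h', fun h' => con_trans h h'⟩

lemma con_of_reach_eq {S : Finset G.E} {v w : G.V} (h : G.reach S v = G.reach S w) :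
    G.ConnectsVia S v w := by
  have : w ∈ G.reach S v := h ▸ mem_reach.2 (con_refl S w)
  exact mem_reach.1 this

lemma ends_rep (e : G.E) : ∃ p q : G.V, G.ends e = s(p, q) := by
  obtain ⟨⟨p, q⟩, h⟩ := Quot.exists_rep (G.ends e)
  exact ⟨p, q, h.symm⟩

lemma classes_step (S : Finset G.E) (e : G.E) :
    (Finset.univ.image (G.reach S)).card ≤
      (Finset.univ.image (G.reach (insert e S))).card + 1 := by
  obtain ⟨p, q, hpq⟩ := ends_rep e
  set S' : Finset G.E := insert e S with hS'
  have herase : S'.erase e ⊆ S := by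
    intro x hx
    rcases Finset.mem_erase.1 hx with ⟨hne, hx'⟩
    rcases Finset.mem_insert.1 hx' with h | h
    · exact absurd h hne
    · exact h
  have hf : ∀ v : G.V,
      (Finset.univ.filter (fun x => ∃ a ∈ G.reach S v, G.ConnectsVia S' a x)) =
        G.reach S' v := by
    intro v
    ext x
    simp only [Finset.mem_filter, Finset.mem_univ, true_and, mem_reach]
    constructor
    · rintro ⟨a, ha, hax⟩
      exact con_trans (con_mono (Finset.subset_insert e S) ha) hax
    · intro h
      exact ⟨v, con_refl S v, h⟩
  set I : Finset (Finset G.V) := Finset.univ.image (G.reach S) with hI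
  set I' : Finset (Finset G.V) := Finset.univ.image (G.reach S') with hI'
  set X : Finset G.V := G.reach S p with hX
  have hkey : (I.erase X).card ≤ I'.card := by
    apply Finset.card_le_card_of_injOn
      (fun A => Finset.univ.filter (fun x => ∃ a ∈ A, G.ConnectsVia S' a x))
    · intro A hA
      rcases Finset.mem_image.1 (Finset.mem_of_mem_erase hA) with ⟨v, _, rfl⟩
      dsimp only
      rw [hf v]
      exact Finset.mem_image.2 ⟨v, Finset.mem_univ v, rfl⟩
    · intro A hA B hB hAB
      rcases Finset.mem_image.1 (Finset.mem_of_mem_erase hA) with ⟨v, _, rfl⟩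
      rcases Finset.mem_image.1 (Finset.mem_of_mem_erase hB) with ⟨w, _, rfl⟩
      simp only [hf] at hAB
      have hcon : G.ConnectsVia S' v w := con_of_reach_eq hAB
      have hbr := bridge (S := S') e hpq hcon
      have hAX : G.reach S v ≠ X := (Finset.mem_erase.1 hA).1
      have hBX : G.reach S w ≠ X := (Finset.mem_erase.1 hB).1
      rcases hbr with h1 | ⟨h1, h2⟩ | ⟨h1, h2⟩
      · exact reach_eq_of_con (con_mono herase h1)
      · exact absurd (reach_eq_of_con (con_mono herase h1)) hAX
      · exact absurd (reach_eq_of_con (con_mono herase h2)).symm hBX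
  by_cases hXI : X ∈ I
  · calc I.card = (I.erase X).card + 1 := (Finset.card_erase_add_one hXI).symm
    _ ≤ I'.card + 1 := by omega
  · rw [Finset.erase_eq_of_notMem hXI] at hkey
    omega

lemma count_classes (S : Finset G.E) :
    Fintype.card G.V ≤ (Finset.univ.image (G.reach S)).card + S.card := by
  induction S using Finset.induction_on with
  | empty =>
    have hr : ∀ v : G.V, G.reach ∅ v = {v} := by
      intro v
      ext x
      simp only [mem_reach, Finset.mem_singleton]
      constructor
      · intro h
        induction h with
        | refl => rfl
        | tail _ hbc ih => rcases hbc with ⟨e, he, _⟩; exact absurd he (Finset.notMem_empty e)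
      · rintro rfl; exact con_refl _ _
    have : Finset.univ.image (G.reach (∅ : Finset G.E)) =
        Finset.univ.image (fun v : G.V => ({v} : Finset G.V)) := by
      apply Finset.image_congr
      intro v _
      exact hr v
    rw [this, Finset.card_image_of_injective _ (fun a b h => Finset.singleton_injective h)]
    simp
  | @insert e S he ih =>
    have h1 := classes_step S e
    have h2 : (insert e S).card = S.card + 1 := Finset.card_insert_of_notMem he
    omega

lemma count_connected {S : Finset G.E} (h : ∀ u v : G.V, G.ConnectsVia S u v) :
    Fintype.card G.V ≤ S.card + 1 := by
  by_cases hV : Nonempty G.V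
  · obtain ⟨v₀⟩ := hV
    have hr : ∀ v : G.V, G.reach S v = Finset.univ := by
      intro v; ext x; simp [mem_reach, h v x]
    have himg : Finset.univ.image (G.reach S) = {Finset.univ} := by
      apply Finset.eq_singleton_iff_unique_mem.2
      constructor
      · exact Finset.mem_image.2 ⟨v₀, Finset.mem_univ _, hr v₀⟩
      · intro A hA
        rcases Finset.mem_image.1 hA with ⟨v, _, rfl⟩
        exact hr v
    have := count_classes (G := G) S
    rw [himg] at this
    simp only [Finset.card_singleton] at this
    omega
  · have : Fintype.card G.V = 0 := by
      rw [Fintype.card_eq_zero_iff]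
      exact ⟨fun v => hV ⟨v⟩⟩
    omega

lemma acyc {S : Finset G.E} (hS : G.IsSpanningTree S) {g : G.E} (hg : g ∈ S)
    {a b : G.V} (hab : G.ends g = s(a, b)) : ¬ G.ConnectsVia (S.erase g) a b := by
  intro h
  have hall : ∀ u v : G.V, G.ConnectsVia (S.erase g) u v :=
    fun u v => repl hab h (hS.1 u v)
  have hc := count_connected hall
  have hce : (S.erase g).card = S.card - 1 := Finset.card_erase_of_mem hg
  have hpos : 1 ≤ S.card := Finset.card_pos.2 ⟨g, hg⟩
  have h2 := hS.2
  omega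


lemma exchange {S : Finset G.E} (hS : G.IsSpanningTree S) {e g : G.E}
    (heS : e ∉ S) (hgS : g ∈ S) {u v : G.V} (hends : G.ends e = s(u, v))
    (hsep : ¬ G.ConnectsVia (S.erase g) u v) :
    G.IsSpanningTree (insert e (S.erase g)) := by
  obtain ⟨p, q, hpq⟩ := ends_rep g
  set S' := insert e (S.erase g) with hS'
  have hsub : S.erase g ⊆ S' := Finset.subset_insert _ _
  have hestep : G.ConnectsVia S' u v := con_step (Finset.mem_insert_self e _) hends
  have hpq' : G.ConnectsVia S' p q := by
    rcases bridge g hpq (hS.1 u v) with h1 | ⟨h1, h2⟩ | ⟨h1, h2⟩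
    · exact absurd h1 hsep
    · exact con_trans (con_symm (con_mono hsub h1))
        (con_trans hestep (con_symm (con_mono hsub h2)))
    · exact con_trans (con_mono hsub h2)
        (con_trans (con_symm hestep) (con_mono hsub h1))
  constructor
  · intro x y
    rcases bridge g hpq (hS.1 x y) with h1 | ⟨h1, h2⟩ | ⟨h1, h2⟩
    · exact con_mono hsub h1
    · exact con_trans (con_mono hsub h1) (con_trans hpq' (con_mono hsub h2))
    · exact con_trans (con_mono hsub h1) (con_trans (con_symm hpq') (con_mono hsub h2))
  · have h1 : e ∉ S.erase g := fun h => heS (Finset.mem_of_mem_erase h)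
    have h2 : S'.card = (S.erase g).card + 1 := Finset.card_insert_of_notMem h1
    have h3 : (S.erase g).card = S.card - 1 := Finset.card_erase_of_mem hgS
    have h4 : 1 ≤ S.card := Finset.card_pos.2 ⟨g, hgS⟩
    have h5 := hS.2
    omega

lemma sum_exchange (f : G.E → ℝ) {S : Finset G.E} {e g : G.E} (heS : e ∉ S) (hgS : g ∈ S) :
    ∑ x ∈ insert e (S.erase g), f x = ∑ x ∈ S, f x + f e - f g := by
  rw [Finset.sum_insert (fun h => heS (Finset.mem_of_mem_erase h)),
    Finset.sum_erase_eq_sub hgS]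
  ring

lemma cycle_erase_connects {C : Finset G.E} (hC : G.IsCycle C) {e : G.E} (heC : e ∈ C)
    {u v : G.V} (hends : G.ends e = s(u, v)) : G.ConnectsVia (C.erase e) u v := by
  by_cases huv : u = v
  · subst huv; exact con_refl _ _
  set S := C.erase e with hSdef
  by_contra hv
  set A := G.reach S u with hA
  have huA : u ∈ A := mem_reach.2 (con_refl _ _)
  have hvA : v ∉ A := fun h => hv (mem_reach.1 h)
  have hclosed : ∀ e' ∈ S, ∀ p q : G.V, G.ends e' = s(p, q) → (p ∈ A ↔ q ∈ A) := by
    intro e' he' p q hpq'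
    simp only [hA, mem_reach]
    exact ⟨fun h => con_trans h (con_step he' hpq'),
      fun h => con_trans h (con_symm (con_step he' hpq'))⟩
  -- parity of the sum of degrees over A
  have hpar : 2 ∣ ∑ x ∈ A, G.incCount S x := by
    have hsw : ∑ x ∈ A, G.incCount S x =
        ∑ e' ∈ S, ∑ x ∈ A, (if G.ends e' = s(x, x) then 2 else if x ∈ G.ends e' then 1 else 0) := by
      unfold UncGraph.incCount
      rw [Finset.sum_comm]
    rw [hsw]
    apply Finset.dvd_sum
    intro e' he'
    obtain ⟨p, q, hpq'⟩ := ends_rep e'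
    by_cases hpqeq : p = q
    · subst hpqeq
      have hterm : ∀ x : G.V,
          (if G.ends e' = s(x, x) then 2 else if x ∈ G.ends e' then 1 else 0) =
            (if x = p then 2 else 0) := by
        intro x
        by_cases hx : x = p
        · subst hx; rw [hpq']; simp
        · rw [hpq']
          have h1 : ¬ (s(p, p) = s(x, x)) := by
            rw [Sym2.eq_iff]; push_neg
            constructor
            · intro h; exact absurd h.symm hx
            · intro h; exact absurd h.symm hx
          have h2 : x ∉ (s(p, p) : Sym2 G.V) := by
            rw [Sym2.mem_iff]; push_neg; exact ⟨fun h => hx h, fun h => hx h⟩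
          simp [h1, h2, hx]
      rw [Finset.sum_congr rfl (fun x _ => hterm x), Finset.sum_ite_eq' A p (fun _ => 2)]
      split <;> simp
    · have hterm : ∀ x : G.V,
          (if G.ends e' = s(x, x) then 2 else if x ∈ G.ends e' then 1 else 0) =
            (if x = p then 1 else 0) + (if x = q then 1 else 0) := by
        intro x
        rw [hpq']
        have h1 : ¬ (s(p, q) = s(x, x)) := by
          rw [Sym2.eq_iff]; push_neg
          exact ⟨fun h h' => hpqeq (h.trans h'.symm), fun h h' => hpqeq (h.trans h'.symm)⟩
        rw [if_neg h1]
        simp only [Sym2.mem_iff]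
        by_cases hx : x = p
        · by_cases hx' : x = q
          · exact absurd (hx.symm.trans hx') hpqeq
          · simp [hx, hx']; exact hpqeq
        · by_cases hx' : x = q
          · simp [hx, hx']; exact fun h => hpqeq h.symm
          · simp [hx, hx']
      rw [Finset.sum_congr rfl (fun x _ => hterm x), Finset.sum_add_distrib,
        Finset.sum_ite_eq' A p (fun _ => 1), Finset.sum_ite_eq' A q (fun _ => 1)]
      have := hclosed e' he' p q hpq'
      by_cases hp : p ∈ A
      · rw [if_pos hp, if_pos (this.1 hp)]
      · rw [if_neg hp, if_neg (fun hq => hp (this.2 hq))]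
        simp
  -- now compute the sum directly as odd
  have hcontrib : ∀ x : G.V, x ≠ u → x ≠ v →
      (if G.ends e = s(x, x) then 2 else if x ∈ G.ends e then 1 else 0) = 0 := by
    intro x hxu hxv
    rw [hends]
    have h1 : ¬ (s(u, v) = s(x, x)) := by
      rw [Sym2.eq_iff]; push_neg
      exact ⟨fun h h' => hxv h'.symm, fun h h' => hxv h'.symm⟩
    have h2 : x ∉ (s(u, v) : Sym2 G.V) := by
      rw [Sym2.mem_iff]; push_neg; exact ⟨hxu, hxv⟩
    simp [h1, h2]
  have hcu : (if G.ends e = s(u, u) then 2 else if u ∈ G.ends e then 1 else 0) = 1 := by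
    rw [hends]
    have h1 : ¬ (s(u, v) = s(u, u)) := by
      rw [Sym2.eq_iff]; push_neg
      exact ⟨fun _ h => huv h.symm, fun _ h => huv h.symm⟩
    have h2 : u ∈ (s(u, v) : Sym2 G.V) := Sym2.mem_mk_left u v
    simp [h1, h2]
  have hsplit : G.incCount S u +
      (if G.ends e = s(u, u) then 2 else if u ∈ G.ends e then 1 else 0) = G.incCount C u := by
    unfold UncGraph.incCount
    exact Finset.sum_erase_add C _ heC
  rw [hcu] at hsplit
  have h01 := hC.2.1 u
  have hISu : G.incCount S u = 1 := by omega
  have heven : ∀ x ∈ A.erase u, 2 ∣ G.incCount S x := by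
    intro x hx
    have hxu : x ≠ u := (Finset.mem_erase.1 hx).1
    have hxv : x ≠ v := fun h => hvA (h ▸ (Finset.mem_erase.1 hx).2)
    have : G.incCount S x = G.incCount C x := by
      unfold UncGraph.incCount
      exact Finset.sum_erase C (hcontrib x hxu hxv)
    rw [this]
    rcases hC.2.1 x with h | h <;> omega
  have hsum2 : ∑ x ∈ A, G.incCount S x = G.incCount S u + ∑ x ∈ A.erase u, G.incCount S x :=
    (Finset.add_sum_erase A _ huA).symm
  have hdvd2 : 2 ∣ ∑ x ∈ A.erase u, G.incCount S x := Finset.dvd_sum heven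
  rw [hsum2, hISu] at hpar
  omega

lemma sep_exists {R : Finset G.E} {u v : G.V} :
    ∀ S : Finset G.E,
      (∀ g ∈ S, ∀ a b : G.V, G.ends g = s(a, b) → ¬ G.ConnectsVia (S.erase g) a b) →
      G.ConnectsVia S u v → ¬ G.ConnectsVia R u v →
      ∃ g ∈ S, (∃ a b : G.V, G.ends g = s(a, b) ∧ ¬ G.ConnectsVia R a b) ∧
        ¬ G.ConnectsVia (S.erase g) u v := by
  intro S
  induction S using Finset.strongInduction with
  | _ S ih =>
    intro hacyc hcon hnc
    obtain ⟨g, hgS, a, b, hab, hnab⟩ := extract_cross hcon hnc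
    by_cases hsep : G.ConnectsVia (S.erase g) u v
    · have hss : S.erase g ⊂ S := Finset.erase_ssubset hgS
      have hacyc' : ∀ g' ∈ S.erase g, ∀ a' b' : G.V, G.ends g' = s(a', b') →
          ¬ G.ConnectsVia ((S.erase g).erase g') a' b' := by
        intro g' hg' a' b' hab' hc
        refine hacyc g' (Finset.mem_of_mem_erase hg') a' b' hab' (con_mono ?_ hc)
        rw [Finset.erase_right_comm]
        exact Finset.erase_subset _ _
      obtain ⟨g₂, hg₂, hcross₂, hsep₂⟩ := ih (S.erase g) hss hacyc' hsep hnc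
      have hg₂g : g₂ ≠ g := (Finset.mem_erase.1 hg₂).1
      refine ⟨g₂, Finset.mem_of_mem_erase hg₂, hcross₂, ?_⟩
      intro h3
      have hcomm : (S.erase g₂).erase g = (S.erase g).erase g₂ := Finset.erase_right_comm
      rcases bridge g hab h3 with h1 | ⟨h1, h2⟩ | ⟨h1, h2⟩
      · exact hsep₂ (hcomm ▸ h1)
      · -- h1 : Con u a, h2 : Con b v in (S.erase g₂).erase g
        have hsub : (S.erase g₂).erase g ⊆ S.erase g := by
          rw [hcomm]; exact Finset.erase_subset _ _
        exact hacyc g hgS a b hab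
          (con_trans (con_symm (con_mono hsub h1))
            (con_trans hsep (con_symm (con_mono hsub h2))))
      · have hsub : (S.erase g₂).erase g ⊆ S.erase g := by
          rw [hcomm]; exact Finset.erase_subset _ _
        exact hacyc g hgS a b hab
          (con_trans (con_mono hsub h2)
            (con_trans (con_symm hsep) (con_mono hsub h1)))
    · exact ⟨g, hgS, ⟨a, b, hab, hnab⟩, hsep⟩

lemma cycle_prop {wf : G.E → ℝ} {T' : Finset G.E} (hT' : G.IsMST wf T')
    {C : Finset G.E} (hC : G.IsCycle C) {e : G.E} (heC : e ∈ C)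
    (hmax : ∀ e' ∈ C, e' ≠ e → wf e' < wf e) : e ∉ T' := by
  intro heT'
  obtain ⟨u, v, hends⟩ := ends_rep e
  have hsep := acyc hT'.1 heT' hends
  have hcyc := cycle_erase_connects hC heC hends
  obtain ⟨g, hgC, a, b, hab, hnab⟩ := extract_cross hcyc hsep
  have hgne : g ≠ e := (Finset.mem_erase.1 hgC).1
  have hgT' : g ∉ T' := fun hgT' => hnab (con_step (Finset.mem_erase.2 ⟨hgne, hgT'⟩) hab)
  have hTsp := exchange hT'.1 hgT' heT' hab hnab
  have hsum := sum_exchange wf hgT' heT'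
  have hlt : wf g < wf e := hmax g (Finset.mem_of_mem_erase hgC) hgne
  have hle := hT'.2 _ hTsp
  rw [hsum] at hle
  linarith

lemma cut_prop {wf : G.E → ℝ} {T' : Finset G.E} (hT' : G.IsMST wf T')
    {T : Finset G.E} (hTsp : G.IsSpanningTree T) {l : G.E} (hlT : l ∈ T)
    (hmin : ∀ g, g ≠ l →
      (∀ a b : G.V, G.ends g = s(a, b) → ¬ G.ConnectsVia (T.erase l) a b) → wf l < wf g) :
    l ∈ T' := by
  by_contra hlT'
  obtain ⟨u, v, hends⟩ := ends_rep l
  have hsep : ¬ G.ConnectsVia (T.erase l) u v := acyc hTsp hlT hends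
  have hacyc : ∀ g ∈ T', ∀ a b : G.V, G.ends g = s(a, b) →
      ¬ G.ConnectsVia (T'.erase g) a b := fun g hg a b hab => acyc hT'.1 hg hab
  obtain ⟨g, hgT', ⟨a, b, hab, hnab⟩, hsep'⟩ :=
    sep_exists (R := T.erase l) T' hacyc (hT'.1.1 u v) hsep
  have hgl : g ≠ l := fun h => hlT' (h ▸ hgT')
  have hlt : wf l < wf g := hmin g hgl (cross_of_rep hab hnab)
  have hTsp2 := exchange hT'.1 hlT' hgT' hends hsep'
  have hsum := sum_exchange wf hlT' hgT'
  have hle := hT'.2 _ hTsp2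
  rw [hsum] at hle
  linarith

lemma mem_I_nontriv {e : G.E} (h : G.L e < G.U e) {x : ℝ} :
    x ∈ G.I e ↔ G.L e < x ∧ x < G.U e := by
  unfold UncGraph.I
  simp only [Set.mem_setOf_eq]
  constructor
  · rintro (⟨h1, _⟩ | h2)
    · exact absurd h1 (ne_of_lt h)
    · exact h2
  · exact Or.inr

lemma mem_I_triv {e : G.E} (h : G.L e = G.U e) {x : ℝ} (hx : x ∈ G.I e) : x = G.L e := by
  rcases hx with ⟨_, h2⟩ | ⟨h1, h2⟩
  · exact h2
  · rw [h] at h1; linarith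

lemma le_of_le_add_eps {a b ε₀ : ℝ} (hε₀ : 0 < ε₀)
    (h : ∀ ε : ℝ, 0 < ε → ε < ε₀ → a ≤ b + ε) : a ≤ b := by
  by_contra hc
  push_neg at hc
  have h1 : 0 < min (ε₀ / 2) ((a - b) / 2) := by
    apply lt_min <;> linarith
  have h2 := h _ h1 (by
    calc min (ε₀ / 2) ((a - b) / 2) ≤ ε₀ / 2 := min_le_left _ _
    _ < ε₀ := by linarith)
  have h3 : min (ε₀ / 2) ((a - b) / 2) ≤ (a - b) / 2 := min_le_right _ _
  linarith

lemma spanning_of_unique {T : Finset G.E} (hT : G.UniqueLimitTrees T) :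
    G.IsSpanningTree T := by
  obtain ⟨ε₀, hε₀, hM⟩ := hT.1
  exact (hM (ε₀ / 2) (by linarith) (by linarith)).1

lemma lower_cross_le {T : Finset G.E} (hT : G.UniqueLimitTrees T)
    {l g : G.E} (hlT : l ∈ T) (hgT : g ∉ T)
    (hcross : ∀ a b : G.V, G.ends g = s(a, b) → ¬ G.ConnectsVia (T.erase l) a b) :
    ∃ ε₀ > (0 : ℝ), ∀ ε : ℝ, 0 < ε → ε < ε₀ →
      G.lowerWeight ε l ≤ G.lowerWeight ε g := by
  obtain ⟨ε₀, hε₀, hM⟩ := hT.1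
  refine ⟨ε₀, hε₀, fun ε h1 h2 => ?_⟩
  have hMST := hM ε h1 h2
  obtain ⟨a, b, hab⟩ := ends_rep g
  have hTsp2 := exchange hMST.1 hgT hlT hab (hcross a b hab)
  have hsum := sum_exchange (G.lowerWeight ε) hgT hlT
  have hle := hMST.2 _ hTsp2
  rw [hsum] at hle
  linarith

lemma lower_cross_strict {T : Finset G.E} (hT : G.UniqueLimitTrees T)
    {l g : G.E} (hlT : l ∈ T) (hgT : g ∉ T)
    (hcross : ∀ a b : G.V, G.ends g = s(a, b) → ¬ G.ConnectsVia (T.erase l) a b)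
    (heq : ∀ ε : ℝ, G.lowerWeight ε l = G.lowerWeight ε g) : False := by
  obtain ⟨ε₀, hε₀, hM⟩ := hT.1
  obtain ⟨a, b, hab⟩ := ends_rep g
  have hTsp : G.IsSpanningTree T := (hM (ε₀ / 2) (by linarith) (by linarith)).1
  have hTsp2 := exchange hTsp hgT hlT hab (hcross a b hab)
  have hLLT : G.IsLowerLimitTree (insert g (T.erase l)) := by
    refine ⟨ε₀, hε₀, fun ε h1 h2 => ?_⟩
    have hMST := hM ε h1 h2
    refine ⟨hTsp2, fun T'' hT'' => ?_⟩
    have hsum := sum_exchange (G.lowerWeight ε) hgT hlT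
    rw [hsum, ← heq ε]
    have := hMST.2 T'' hT''
    linarith
  have := hT.2.2.1 _ hLLT
  have hg : g ∈ insert g (T.erase l) := Finset.mem_insert_self _ _
  rw [this] at hg
  exact hgT hg

lemma cross_lb {T : Finset G.E} (hT : G.UniqueLimitTrees T)
    {l g : G.E} (hlT : l ∈ T) (hgT : g ∉ T)
    (hcross : ∀ a b : G.V, G.ends g = s(a, b) → ¬ G.ConnectsVia (T.erase l) a b)
    (hnl : G.L l < G.U l) {y : ℝ} (hy : y ∈ G.I g) : G.L l < y := by
  obtain ⟨ε₀, hε₀, hle⟩ := lower_cross_le hT hlT hgT hcross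
  have hlwl : ∀ ε : ℝ, G.lowerWeight ε l = G.L l + ε := by
    intro ε
    unfold UncGraph.lowerWeight
    rw [if_neg (ne_of_lt hnl)]
  by_cases hg : G.L g = G.U g
  · have hyg : y = G.L g := mem_I_triv hg hy
    have h1 := hle (ε₀ / 2) (by linarith) (by linarith)
    rw [hlwl] at h1
    unfold UncGraph.lowerWeight at h1
    rw [if_pos hg] at h1
    rw [hyg]
    linarith
  · have hg' : G.L g < G.U g := lt_of_le_of_ne (G.LU g) hg
    have hyg : G.L g < y := ((mem_I_nontriv hg').1 hy).1
    have hLL : G.L l ≤ G.L g := by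
      apply le_of_le_add_eps hε₀
      intro ε h1 h2
      have h3 := hle ε h1 h2
      rw [hlwl] at h3
      unfold UncGraph.lowerWeight at h3
      rw [if_neg hg] at h3
      linarith
    linarith

lemma cycleOf_cross {T : Finset G.E} (hTsp : G.IsSpanningTree T) {f : G.E} (hfT : f ∉ T)
    {C : Finset G.E} (hC : G.IsCycleOf T f C) {l : G.E} (hlC : l ∈ C) (hlf : l ≠ f) :
    ∀ a b : G.V, G.ends f = s(a, b) → ¬ G.ConnectsVia (T.erase l) a b := by
  intro a b hab hcon
  obtain ⟨p, q, hpq⟩ := ends_rep l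
  have hlT : l ∈ T := by
    rcases Finset.mem_insert.1 (hC.2.2 hlC) with h | h
    · exact absurd h hlf
    · exact h
  have hcyc : G.ConnectsVia (C.erase l) p q := cycle_erase_connects hC.1 hlC hpq
  have hsub : C.erase l ⊆ insert f (T.erase l) := by
    intro x hx
    rcases Finset.mem_erase.1 hx with ⟨hxl, hxC⟩
    rcases Finset.mem_insert.1 (hC.2.2 hxC) with h | h
    · exact Finset.mem_insert.2 (Or.inl h)
    · exact Finset.mem_insert.2 (Or.inr (Finset.mem_erase.2 ⟨hxl, h⟩))
  have h2 : G.ConnectsVia (insert f (T.erase l)) p q := con_mono hsub hcyc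
  have hrm : (insert f (T.erase l)).erase f = T.erase l :=
    Finset.erase_insert (fun h => hfT (Finset.mem_of_mem_erase h))
  have h3 : G.ConnectsVia (T.erase l) p q := by
    have := repl (S := insert f (T.erase l)) (g := f) hab (by rw [hrm]; exact hcon) h2
    rwa [hrm] at this
  exact acyc hTsp hlT hpq h3

lemma lw_triv {e : G.E} (h : G.L e = G.U e) (ε : ℝ) : G.lowerWeight ε e = G.L e := by
  unfold UncGraph.lowerWeight; rw [if_pos h]

lemma lw_nontriv {e : G.E} (h : G.L e ≠ G.U e) (ε : ℝ) : G.lowerWeight ε e = G.L e + ε := by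
  unfold UncGraph.lowerWeight; rw [if_neg h]

/-- If some value lies in both intervals `I f` and `I l`, where `f` crosses the cut
of the tree edge `l`, then `l` is non-trivial. -/
lemma nontriv_of_inter {T : Finset G.E} (hT : G.UniqueLimitTrees T)
    {f l : G.E} (hfT : f ∉ T) (hlT : l ∈ T)
    (hcross : ∀ a b : G.V, G.ends f = s(a, b) → ¬ G.ConnectsVia (T.erase l) a b)
    {x : ℝ} (hxf : x ∈ G.I f) (hxl : x ∈ G.I l) : G.L l < G.U l := by
  by_contra hc
  have hltriv : G.L l = G.U l := le_antisymm (G.LU l) (not_lt.1 hc)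
  have hxLl : x = G.L l := mem_I_triv hltriv hxl
  obtain ⟨ε₀, hε₀, hle⟩ := lower_cross_le hT hlT hfT hcross
  by_cases hftriv : G.L f = G.U f
  · have hxLf : x = G.L f := mem_I_triv hftriv hxf
    refine lower_cross_strict hT hlT hfT hcross (fun ε => ?_)
    rw [lw_triv hltriv, lw_triv hftriv, ← hxLl, ← hxLf]
  · have hf' : G.L f < G.U f := lt_of_le_of_ne (G.LU f) hftriv
    have hxf' : G.L f < x := ((mem_I_nontriv hf').1 hxf).1
    have hLL : G.L l ≤ G.L f := by
      apply le_of_le_add_eps hε₀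
      intro ε h1 h2
      have h3 := hle ε h1 h2
      rw [lw_triv hltriv, lw_nontriv hftriv] at h3
      exact h3
    rw [hxLl] at hxf'
    linarith

/-- Main contradiction lemma. -/
lemma main_contra (G : UncGraph) (w : G.E → ℝ) (hw : G.Valid w)
    (T : Finset G.E) (hT : G.UniqueLimitTrees T)
    (f : G.E) (hf : f ∉ T)
    (C : Finset G.E) (hC : G.IsCycleOf T f C)
    (li : G.E) (hli : li ∈ C) (hlif : li ≠ f)
    (hmax : ∀ e ∈ C, e ≠ f → G.U e ≤ G.U li)
    (Q : Finset G.E) (hQ : G.Feasible w Q) (hliQ : li ∉ Q)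
    (xf : ℝ) (hxf : xf ∈ G.I f) (hxl : xf ∈ G.I li)
    (hfQ : f ∈ Q → xf = w f) : False := by
  have hTsp : G.IsSpanningTree T := spanning_of_unique hT
  have hliT : li ∈ T := by
    rcases Finset.mem_insert.1 (hC.2.2 hli) with h | h
    · exact absurd h hlif
    · exact h
  have hcrossf := cycleOf_cross hTsp hf hC hli hlif
  have hnl : G.L li < G.U li := nontriv_of_inter hT hf hliT hcrossf hxf hxl
  have hxlb := (mem_I_nontriv hnl).1 hxl
  -- true values of other cycle edges are strictly below U li
  have hbelow : ∀ e ∈ C, e ≠ f → e ≠ li → w e < G.U li := by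
    intro e he hef heli
    have hUe := hmax e he hef
    by_cases hloc : G.L e = G.U e
    · have hwe : w e = G.L e := mem_I_triv hloc (hw e)
      rcases lt_or_eq_of_le hUe with h | h
      · rw [hwe, hloc]; exact h
      -- U e = U li : impossible
      · exfalso
        have heT : e ∈ T := by
          rcases Finset.mem_insert.1 (hC.2.2 he) with h' | h'
          · exact absurd h' hef
          · exact h'
        have hcrosse := cycleOf_cross hTsp hf hC he hef
        obtain ⟨ε₀, hε₀, hle⟩ := lower_cross_le hT heT hf hcrosse
        by_cases hftriv : G.L f = G.U f
        · have hxLf : xf = G.L f := mem_I_triv hftriv hxf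
          have h1 := hle (ε₀ / 2) (by linarith) (by linarith)
          rw [lw_triv hloc, lw_triv hftriv] at h1
          -- G.L e ≤ G.L f, xf = L f, L e = U e = U li, xf < U li
          rw [hxLf] at hxlb
          have := hxlb.2
          rw [← h, ← hloc] at this
          linarith
        · have hf' : G.L f < G.U f := lt_of_le_of_ne (G.LU f) hftriv
          have hxf' : G.L f < xf := ((mem_I_nontriv hf').1 hxf).1
          have hLL : G.L e ≤ G.L f := by
            apply le_of_le_add_eps hε₀
            intro ε h1 h2
            have h3 := hle ε h1 h2
            rw [lw_triv hloc, lw_nontriv hftriv] at h3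
            exact h3
          have := hxlb.2
          rw [← h, ← hloc] at this
          linarith
    · have hloc' : G.L e < G.U e := lt_of_le_of_ne (G.LU e) hloc
      have := ((mem_I_nontriv hloc').1 (hw e)).2
      linarith
  obtain ⟨T', hver⟩ := hQ
  -- the common modified value function on edges other than li
  set vC : G.E → ℝ := fun e => if e = f then xf else w e with hvC
  have hvC_lt : ∀ e ∈ C.erase li, vC e < G.U li := by
    intro e he
    rcases Finset.mem_erase.1 he with ⟨heli, heC⟩
    by_cases hef : e = f
    · rw [hvC]; simp only [if_pos hef]; exact hxlb.2
    · rw [hvC]; simp only [if_neg hef]; exact hbelow e heC hef heli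
  -- Realization A: push li to the top of the cycle
  have hfC' : f ∈ C.erase li := Finset.mem_erase.2 ⟨fun h => hlif h.symm, hC.2.1⟩
  set sA : Finset ℝ := insert (G.L li) ((C.erase li).image vC) with hsA
  have hsAne : sA.Nonempty := ⟨G.L li, Finset.mem_insert_self _ _⟩
  set m : ℝ := sA.max' hsAne with hm
  have hmlt : m < G.U li := by
    rw [hm]
    apply (Finset.max'_lt_iff sA hsAne).2
    intro y hy
    rcases Finset.mem_insert.1 hy with h | h
    · rw [h]; exact hnl
    · obtain ⟨e, he, rfl⟩ := Finset.mem_image.1 h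
      exact hvC_lt e he
  have hmge : G.L li ≤ m := Finset.le_max' sA _ (Finset.mem_insert_self _ _)
  set aval : ℝ := (m + G.U li) / 2 with haval
  have haval1 : m < aval := by rw [haval]; linarith
  have haval2 : aval < G.U li := by rw [haval]; linarith
  have haval0 : G.L li < aval := lt_of_le_of_lt hmge haval1
  set vA : G.E → ℝ := fun e => if e = li then aval else vC e with hvA
  have hcompA : G.Compatible w Q vA := by
    constructor
    · intro e heQ
      rw [hvA]
      simp only
      rw [if_neg (fun h : e = li => hliQ (h ▸ heQ))]
      by_cases hef : e = f
      · rw [hvC]; simp only [if_pos hef]; rw [hef]; exact hfQ (hef ▸ heQ)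
      · rw [hvC]; simp only [if_neg hef]
    · intro e
      rw [hvA]
      simp only
      by_cases hel : e = li
      · rw [if_pos hel, hel]
        exact (mem_I_nontriv hnl).2 ⟨haval0, haval2⟩
      · rw [if_neg hel, hvC]
        by_cases hef : e = f
        · simp only [if_pos hef]; rw [hef]; exact hxf
        · simp only [if_neg hef]; exact hw e
  have hMSTA := hver vA hcompA
  have hnotin : li ∉ T' := by
    refine cycle_prop hMSTA hC.1 hli (fun e' he' hne => ?_)
    rw [hvA]
    simp only
    rw [if_neg hne, if_pos trivial]
    have h1 : vC e' ≤ m :=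
      Finset.le_max' sA _ (Finset.mem_insert.2 (Or.inr
        (Finset.mem_image.2 ⟨e', Finset.mem_erase.2 ⟨hne, he'⟩, rfl⟩)))
    linarith
  -- Realization B: push li to the bottom of its cut
  set crossSet : Finset G.E := Finset.univ.filter (fun g => g ≠ li ∧
    ∀ a b : G.V, G.ends g = s(a, b) → ¬ G.ConnectsVia (T.erase li) a b) with hcs
  set sB : Finset ℝ := insert (G.U li) (crossSet.image vC) with hsB
  have hsBne : sB.Nonempty := ⟨G.U li, Finset.mem_insert_self _ _⟩
  set t : ℝ := sB.min' hsBne with ht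
  have htgt : G.L li < t := by
    rw [ht]
    apply (Finset.lt_min'_iff sB hsBne).2
    intro y hy
    rcases Finset.mem_insert.1 hy with h | h
    · rw [h]; exact hnl
    · obtain ⟨g, hg, rfl⟩ := Finset.mem_image.1 h
      rcases Finset.mem_filter.1 hg with ⟨-, hgli, hgcross⟩
      by_cases hgf : g = f
      · rw [hvC]; simp only [if_pos hgf]; exact hxlb.1
      · rw [hvC]; simp only [if_neg hgf]
        have hgT : g ∉ T := by
          intro hgT
          obtain ⟨a, b, hab⟩ := ends_rep g
          exact hgcross a b hab (con_step (Finset.mem_erase.2 ⟨hgli, hgT⟩) hab)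
        exact cross_lb hT hliT hgT hgcross hnl (hw g)
  have htle : t ≤ G.U li := Finset.min'_le sB _ (Finset.mem_insert_self _ _)
  set bval : ℝ := (G.L li + t) / 2 with hbval
  have hbval1 : G.L li < bval := by rw [hbval]; linarith
  have hbval2 : bval < t := by rw [hbval]; linarith
  set vB : G.E → ℝ := fun e => if e = li then bval else vC e with hvB
  have hcompB : G.Compatible w Q vB := by
    constructor
    · intro e heQ
      rw [hvB]
      simp only
      rw [if_neg (fun h : e = li => hliQ (h ▸ heQ))]
      by_cases hef : e = f
      · rw [hvC]; simp only [if_pos hef]; rw [hef]; exact hfQ (hef ▸ heQ)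
      · rw [hvC]; simp only [if_neg hef]
    · intro e
      rw [hvB]
      simp only
      by_cases hel : e = li
      · rw [if_pos hel, hel]
        exact (mem_I_nontriv hnl).2 ⟨hbval1, lt_of_lt_of_le hbval2 htle⟩
      · rw [if_neg hel, hvC]
        by_cases hef : e = f
        · simp only [if_pos hef]; rw [hef]; exact hxf
        · simp only [if_neg hef]; exact hw e
  have hMSTB := hver vB hcompB
  have hin : li ∈ T' := by
    refine cut_prop hMSTB hTsp hliT (fun g hgli hgcross => ?_)
    have hgmem : g ∈ crossSet := Finset.mem_filter.2 ⟨Finset.mem_univ g, hgli, hgcross⟩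
    have h1 : t ≤ vC g :=
      Finset.min'_le sB _ (Finset.mem_insert.2 (Or.inr (Finset.mem_image.2 ⟨g, hgmem, rfl⟩)))
    rw [hvB]
    simp only
    rw [if_pos trivial, if_neg hgli]
    linarith
  exact hnotin hin

end UncGraph

/-- in an instance with unique `T_L = T_U`, for the cycle `C`
closed by an edge `f ∉ T_L`, if `l ∈ C ∖ {f}` has `I_l ∩ I_f ≠ ∅` and the
largest upper limit in `C ∖ {f}`, then `{f, l}` is a witness set; moreover if
`w f ∈ I_l` then `l` is mandatory. -/
theorem cycle_witness_set
    (G : UncGraph) (w : G.E → ℝ) (hw : G.Valid w)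
    (T : Finset G.E) (hT : G.UniqueLimitTrees T)
    (f : G.E) (hf : f ∉ T)
    (C : Finset G.E) (hC : G.IsCycleOf T f C)
    (li : G.E) (hli : li ∈ C) (hlif : li ≠ f)
    (hint : (G.I li ∩ G.I f).Nonempty)
    (hmax : ∀ e ∈ C, e ≠ f → G.U e ≤ G.U li) :
    G.IsWitnessSet w {f, li} ∧ (w f ∈ G.I li → G.Mandatory w li) := by
  constructor
  · intro Q hQ
    by_contra hno
    push_neg at hno
    have hfQ : f ∉ Q := hno f (Finset.mem_insert_self _ _)
    have hliQ : li ∉ Q := hno li (Finset.mem_insert.2 (Or.inr (Finset.mem_singleton_self _)))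
    obtain ⟨x, hx⟩ := hint
    exact UncGraph.main_contra G w hw T hT f hf C hC li hli hlif hmax Q hQ hliQ
      x hx.2 hx.1 (fun h => absurd h hfQ)
  · intro hwfl Q hQ
    by_contra hliQ
    exact UncGraph.main_contra G w hw T hT f hf C hC li hli hlif hmax Q hQ hliQ
      (w f) (hw f) hwfl (fun _ => rfl)
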